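/- arXiv:1502.06746 — 2 statements merged into one kernel-verified Lean document; each statement's English description precedes it below -/
import Mathlib

section
/- Let P be a harmonic polynomial on ℝ^{k+1}, homogeneous of degree ℓ. Then its restriction to the unit sphere S^k is an eigenfunction of the spherical Laplacian Δ_{S^k} with eigenvalue ℓ(k+ℓ−1), i.e. Δ_{S^k}(P|_{S^k}) = −ℓ(k+ℓ−1)·P|_{S^k} (with the geometer's sign convention Δ = div grad). -/
open MeasureTheory Metric MvPolynomial

/-- The Euclidean Laplacian (sum of second derivatives along the standard basis). -/
noncomputable def lap {n : ℕ} (f : EuclideanSpace ℝ (Fin n) → ℝ)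
    (x : EuclideanSpace ℝ (Fin n)) : ℝ :=
  ∑ i, iteratedFDeriv ℝ 2 f x ![EuclideanSpace.single i 1, EuclideanSpace.single i 1]

/-- The Laplace–Beltrami operator of the unit sphere, computed as the Euclidean Laplacian of
the degree-zero homogeneous extension (evaluated at points of the sphere). -/
noncomputable def sphereLaplacian {n : ℕ} (f : EuclideanSpace ℝ (Fin n) → ℝ)
    (θ : EuclideanSpace ℝ (Fin n)) : ℝ :=
  lap (fun x => f (‖x‖⁻¹ • x)) θ

namespace SHAux

open Filter

variable {n : ℕ}

@[simp] lemma proj_apply (i : Fin n) (x : EuclideanSpace ℝ (Fin n)) :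
    (EuclideanSpace.proj (𝕜 := ℝ) i) x = x i := rfl

/-- sum of squares. -/
def q (x : EuclideanSpace ℝ (Fin n)) : ℝ := ∑ j, x j * x j

/-- derivative of `q`. -/
noncomputable def Q (x : EuclideanSpace ℝ (Fin n)) : EuclideanSpace ℝ (Fin n) →L[ℝ] ℝ :=
  ∑ j, (x j • EuclideanSpace.proj j + x j • EuclideanSpace.proj j)

lemma hasFDerivAt_q (x : EuclideanSpace ℝ (Fin n)) : HasFDerivAt q (Q x) x :=
  HasFDerivAt.fun_sum fun j _ =>
    ((EuclideanSpace.proj (𝕜 := ℝ) j).hasFDerivAt.fun_mul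
      (EuclideanSpace.proj (𝕜 := ℝ) j).hasFDerivAt)

lemma contDiff_q {N : WithTop ℕ∞} : ContDiff ℝ N (q (n := n)) :=
  ContDiff.sum fun j _ => ((EuclideanSpace.proj (𝕜 := ℝ) j).contDiff).mul
    (EuclideanSpace.proj (𝕜 := ℝ) j).contDiff

lemma Q_apply_single (x : EuclideanSpace ℝ (Fin n)) (i : Fin n) :
    Q x (EuclideanSpace.single i 1) = 2 * x i := by
  simp [Q, ContinuousLinearMap.sum_apply, EuclideanSpace.single_apply, two_mul,
    Finset.sum_add_distrib, Finset.sum_ite_eq']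

lemma q_eq_norm_sq (x : EuclideanSpace ℝ (Fin n)) : q x = ‖x‖ ^ 2 := by
  rw [EuclideanSpace.norm_eq, Real.sq_sqrt (by positivity)]
  exact Finset.sum_congr rfl fun j _ => by rw [Real.norm_eq_abs, sq_abs, sq]

lemma sum_smul_single (x : EuclideanSpace ℝ (Fin n)) :
    ∑ i, x i • EuclideanSpace.single i (1 : ℝ) = x := by
  simpa [EuclideanSpace.basisFun_apply, EuclideanSpace.basisFun_repr]
    using (EuclideanSpace.basisFun (Fin n) ℝ).sum_repr x

lemma contDiff_eval {N : WithTop ℕ∞} (p : MvPolynomial (Fin n) ℝ) :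
    ContDiff ℝ N (fun y : EuclideanSpace ℝ (Fin n) => eval y p) := by
  induction p using MvPolynomial.induction_on with
  | C a => simpa using contDiff_const
  | add p q hp hq => simpa using hp.add hq
  | mul_X p i hp =>
    have : ContDiff ℝ N (fun y : EuclideanSpace ℝ (Fin n) => eval y p * y i) :=
      hp.mul (EuclideanSpace.proj (𝕜 := ℝ) i).contDiff
    simpa [eval_mul] using this

end SHAux

open SHAux Filter Topology

/-- A harmonic polynomial homogeneous of degree ℓ restricts to an eigenfunction of the
spherical Laplacian with eigenvalue −ℓ(k+ℓ−1). -/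
theorem spherical_harmonic_eigenfunction (k ℓ : ℕ) (p : MvPolynomial (Fin (k+1)) ℝ)
    (hharm : ∀ x : EuclideanSpace ℝ (Fin (k+1)), lap (fun y => eval y p) x = 0)
    (hhom : ∀ (t : ℝ), 0 < t → ∀ x : EuclideanSpace ℝ (Fin (k+1)),
      eval (t • x : EuclideanSpace ℝ (Fin (k+1))) p = t ^ ℓ * eval x p) :
    ∀ θ : EuclideanSpace ℝ (Fin (k+1)), ‖θ‖ = 1 →
      sphereLaplacian (fun y => eval y p) θ =
        -((ℓ : ℝ) * ((k : ℝ) + (ℓ : ℝ) - 1)) * eval θ p := by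
  intro θ hθ
  classical
  have hθ0 : θ ≠ 0 := fun h => by simp [h] at hθ
  set f : EuclideanSpace ℝ (Fin (k+1)) → ℝ := fun y => eval y p with hfdef
  have hf : ContDiff ℝ 2 f := contDiff_eval p
  have hfd : Differentiable ℝ f := hf.differentiable two_ne_zero
  have hfd1 : Differentiable ℝ (fderiv ℝ f) :=
    (hf.fderiv_right (m := 1) (by norm_num)).differentiable one_ne_zero
  have hqθ : q θ = 1 := by rw [q_eq_norm_sq, hθ]; norm_num
  have hqpos : ∀ x : EuclideanSpace ℝ (Fin (k+1)), x ≠ 0 → 0 < q x := by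
    intro x hx
    rw [q_eq_norm_sq]
    exact pow_pos (norm_pos_iff.2 hx) 2
  set s : ℝ := -((ℓ : ℝ)/2) with hsdef
  set g : EuclideanSpace ℝ (Fin (k+1)) → ℝ := fun x => q x ^ s * f x with hgdef
  -- the scaling identity
  have hscale : ∀ x : EuclideanSpace ℝ (Fin (k+1)), x ≠ 0 → f (‖x‖⁻¹ • x) = g x := by
    intro x hx
    have hnx : (0:ℝ) < ‖x‖ := norm_pos_iff.2 hx
    have h1 : f (‖x‖⁻¹ • x) = (‖x‖⁻¹)^ℓ * f x := hhom _ (by positivity) x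
    have h2 : q x ^ s = (‖x‖⁻¹)^ℓ := by
      have h3 : (2:ℝ) * s = -(ℓ:ℝ) := by rw [hsdef]; ring
      rw [q_eq_norm_sq, ← Real.rpow_natCast ‖x‖ 2, ← Real.rpow_mul (norm_nonneg x)]
      push_cast
      rw [h3, Real.rpow_neg (norm_nonneg x), Real.rpow_natCast, inv_pow]
    simp only [hgdef]
    rw [h1, h2]
  have h0 : ∀ᶠ x in 𝓝 θ, x ≠ (0 : EuclideanSpace ℝ (Fin (k+1))) := eventually_ne_nhds hθ0
  have hEqF : (fun x => f (‖x‖⁻¹ • x)) =ᶠ[𝓝 θ] g := by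
    filter_upwards [h0] with x hx using hscale x hx
  -- reduce the spherical Laplacian to second derivatives of g
  have hkey : sphereLaplacian f θ =
      ∑ i, fderiv ℝ (fderiv ℝ g) θ (EuclideanSpace.single i 1) (EuclideanSpace.single i 1) := by
    have h2 : fderiv ℝ (fderiv ℝ (fun x => f (‖x‖⁻¹ • x))) θ = fderiv ℝ (fderiv ℝ g) θ :=
      (hEqF.fderiv).fderiv_eq
    simp only [sphereLaplacian, lap, iteratedFDeriv_two_apply, Matrix.cons_val_zero,
      Matrix.cons_val_one, Matrix.head_cons, h2]
  -- derivative of g away from zero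
  have hg' : ∀ x : EuclideanSpace ℝ (Fin (k+1)), x ≠ 0 →
      HasFDerivAt g ((q x ^ s) • fderiv ℝ f x + f x • ((s * q x ^ (s-1)) • Q x)) x := by
    intro x hx
    simp only [hgdef]
    exact ((hasFDerivAt_q x).rpow_const (Or.inl (hqpos x hx).ne')).fun_mul (hfd x).hasFDerivAt
  set φ : Fin (k+1) → EuclideanSpace ℝ (Fin (k+1)) → ℝ := fun i x =>
    q x ^ s * (fderiv ℝ f x (EuclideanSpace.single i 1))
      + f x * ((s * q x ^ (s-1)) * (2 * x i)) with hφdef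
  have hφeq : ∀ i, (fun x => fderiv ℝ g x (EuclideanSpace.single i 1)) =ᶠ[𝓝 θ] φ i := by
    intro i
    filter_upwards [h0] with x hx
    rw [(hg' x hx).fderiv]
    simp only [hφdef, ContinuousLinearMap.add_apply, ContinuousLinearMap.smul_apply,
      Q_apply_single, smul_eq_mul]
    try ring
  -- harmonicity
  have hH : ∑ i, fderiv ℝ (fderiv ℝ f) θ (EuclideanSpace.single i 1)
      (EuclideanSpace.single i 1) = 0 := by
    have := hharm θ
    simpa [lap, iteratedFDeriv_two_apply] using this
  -- Euler identity
  have heuler : fderiv ℝ f θ θ = (ℓ:ℝ) * f θ := by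
    have hθ1 : HasFDerivAt f (fderiv ℝ f θ) ((1:ℝ) • θ) := by
      rw [one_smul]; exact (hfd θ).hasFDerivAt
    have h1 : HasDerivAt (fun t : ℝ => f (t • θ)) (fderiv ℝ f θ θ) 1 := by
      have h := hθ1.comp_hasDerivAt (1:ℝ) ((hasDerivAt_id (1:ℝ)).smul_const θ)
      simp at h; exact h
    have h2 : HasDerivAt (fun t : ℝ => f (t • θ)) ((ℓ:ℝ) * (1:ℝ)^(ℓ-1) * f θ) 1 := by
      have hp : HasDerivAt (fun t : ℝ => t ^ ℓ * f θ) ((ℓ:ℝ) * (1:ℝ)^(ℓ-1) * f θ) 1 :=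
        (hasDerivAt_pow ℓ 1).mul_const (f θ)
      refine hp.congr_of_eventuallyEq ?_
      filter_upwards [eventually_gt_nhds zero_lt_one] with t ht
      exact hhom t ht θ
    have := h1.unique h2
    simpa using this
  have heuler' : ∑ i, θ i * fderiv ℝ f θ (EuclideanSpace.single i 1) = (ℓ:ℝ) * f θ := by
    have h1 : ∑ i, θ i * fderiv ℝ f θ (EuclideanSpace.single i 1)
        = fderiv ℝ f θ (∑ i, θ i • EuclideanSpace.single i (1:ℝ)) := by
      rw [map_sum]
      simp [smul_eq_mul]
    rw [h1, sum_smul_single, heuler]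
  have hsq : ∑ i, θ i * θ i = 1 := hqθ
  -- second derivative entries of g equal those of φ
  have hgc : ContDiffAt ℝ 2 g θ := by
    have h1 : ContDiffAt ℝ 2 (fun x : EuclideanSpace ℝ (Fin (k+1)) => q x ^ s) θ :=
      (contDiff_q.contDiffAt).rpow_const_of_ne (by rw [hqθ]; norm_num)
    simp only [hgdef]
    exact h1.mul hf.contDiffAt
  have hDg : DifferentiableAt ℝ (fderiv ℝ g) θ :=
    (hgc.fderiv_right (m := 1) (by norm_num)).differentiableAt one_ne_zero
  have hentry : ∀ i, fderiv ℝ (fderiv ℝ g) θ (EuclideanSpace.single i 1)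
      (EuclideanSpace.single i 1) = fderiv ℝ (φ i) θ (EuclideanSpace.single i 1) := by
    intro i
    have h1 : fderiv ℝ (fun x => fderiv ℝ g x (EuclideanSpace.single i 1)) θ
        = fderiv ℝ (φ i) θ := (hφeq i).fderiv_eq
    have h2 : fderiv ℝ (fun x => fderiv ℝ g x (EuclideanSpace.single i 1)) θ
          (EuclideanSpace.single i 1)
        = fderiv ℝ (fderiv ℝ g) θ (EuclideanSpace.single i 1) (EuclideanSpace.single i 1) := by
      rw [fderiv_clm_apply hDg (differentiableAt_const _)]
      simp
    rw [← h2, h1]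
  -- value of the derivative of φ i at θ in direction single i 1
  have hDival : ∀ i, fderiv ℝ (fun x => fderiv ℝ f x (EuclideanSpace.single i 1)) θ
      (EuclideanSpace.single i 1)
      = fderiv ℝ (fderiv ℝ f) θ (EuclideanSpace.single i 1) (EuclideanSpace.single i 1) := by
    intro i
    rw [fderiv_clm_apply (hfd1 θ) (differentiableAt_const _)]
    simp
  have hφval : ∀ i, fderiv ℝ (φ i) θ (EuclideanSpace.single i 1) =
      fderiv ℝ (fderiv ℝ f) θ (EuclideanSpace.single i 1) (EuclideanSpace.single i 1)
      + (4*s) * (θ i * fderiv ℝ f θ (EuclideanSpace.single i 1))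
      + 2*s*(f θ) + (4*s*(s-1)*(f θ)) * (θ i * θ i) := by
    intro i
    have hq1 : HasFDerivAt (fun x : EuclideanSpace ℝ (Fin (k+1)) => q x ^ s)
        ((s * q θ ^ (s-1)) • Q θ) θ :=
      (hasFDerivAt_q θ).rpow_const (Or.inl (by rw [hqθ]; norm_num))
    have hq2 : HasFDerivAt (fun x : EuclideanSpace ℝ (Fin (k+1)) => q x ^ (s-1))
        (((s-1) * q θ ^ (s-1-1)) • Q θ) θ :=
      (hasFDerivAt_q θ).rpow_const (Or.inl (by rw [hqθ]; norm_num))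
    have hq3 : HasFDerivAt (fun x : EuclideanSpace ℝ (Fin (k+1)) => s * q x ^ (s-1))
        (s • (((s-1) * q θ ^ (s-1-1)) • Q θ)) θ := hq2.const_mul s
    have hxi : HasFDerivAt (fun x : EuclideanSpace ℝ (Fin (k+1)) => 2 * x i)
        ((2:ℝ) • (EuclideanSpace.proj (𝕜 := ℝ) i)) θ :=
      (EuclideanSpace.proj (𝕜 := ℝ) i).hasFDerivAt.const_mul 2
    have hu : HasFDerivAt (fun x : EuclideanSpace ℝ (Fin (k+1)) =>
        (s * q x ^ (s-1)) * (2 * x i))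
        ((s * q θ ^ (s-1)) • ((2:ℝ) • (EuclideanSpace.proj (𝕜 := ℝ) i))
          + (2 * θ i) • (s • (((s-1) * q θ ^ (s-1-1)) • Q θ))) θ := hq3.fun_mul hxi
    have hDiF : HasFDerivAt (fun x => fderiv ℝ f x (EuclideanSpace.single i 1))
        (fderiv ℝ (fun x => fderiv ℝ f x (EuclideanSpace.single i 1)) θ) θ :=
      ((hfd1 θ).clm_apply (differentiableAt_const _)).hasFDerivAt
    have ht1 : HasFDerivAt
        (fun x => q x ^ s * (fderiv ℝ f x (EuclideanSpace.single i 1)))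
        ((q θ ^ s) • fderiv ℝ (fun x => fderiv ℝ f x (EuclideanSpace.single i 1)) θ
          + (fderiv ℝ f θ (EuclideanSpace.single i 1)) • ((s * q θ ^ (s-1)) • Q θ)) θ :=
      hq1.fun_mul hDiF
    have ht2 : HasFDerivAt
        (fun x => f x * ((s * q x ^ (s-1)) * (2 * x i)))
        ((f θ) • ((s * q θ ^ (s-1)) • ((2:ℝ) • (EuclideanSpace.proj (𝕜 := ℝ) i))
            + (2 * θ i) • (s • (((s-1) * q θ ^ (s-1-1)) • Q θ)))
          + ((s * q θ ^ (s-1)) * (2 * θ i)) • fderiv ℝ f θ) θ :=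
      (hfd θ).hasFDerivAt.fun_mul hu
    have hφi : HasFDerivAt (φ i) _ θ := ht1.fun_add ht2
    rw [hφi.fderiv]
    simp [ContinuousLinearMap.add_apply, ContinuousLinearMap.smul_apply,
      Q_apply_single, smul_eq_mul, EuclideanSpace.single_apply,
      hqθ, Real.one_rpow, hDival i]
    ring
  -- put it all together
  rw [hkey]
  have hsum : ∑ i, fderiv ℝ (fderiv ℝ g) θ (EuclideanSpace.single i 1)
      (EuclideanSpace.single i 1)
      = 0 + (4*s) * ((ℓ:ℝ) * f θ) + (k+1) * (2*s*(f θ)) + (4*s*(s-1)*(f θ)) * 1 := by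
    rw [Finset.sum_congr rfl fun i _ => (hentry i).trans (hφval i)]
    have e2 : ∑ i, (4*s) * (θ i * fderiv ℝ f θ (EuclideanSpace.single i 1))
        = (4*s) * ((ℓ:ℝ) * f θ) := by rw [← Finset.mul_sum, heuler']
    have e3 : ∑ _i : Fin (k+1), 2*s*(f θ) = ((k:ℝ)+1) * (2*s*(f θ)) := by
      rw [Finset.sum_const, Finset.card_univ, Fintype.card_fin, nsmul_eq_mul]
      push_cast
      ring
    have e4 : ∑ i, (4*s*(s-1)*(f θ)) * (θ i * θ i) = (4*s*(s-1)*(f θ)) * 1 := by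
      rw [← Finset.mul_sum, hsq]
    rw [Finset.sum_add_distrib, Finset.sum_add_distrib, Finset.sum_add_distrib,
      hH, e2, e3, e4]
  rw [hsum, hsdef]
  ring
end

section
/- Let R be an algebraic curvature tensor on ℝ^{k+1}. Then ∫_{S^k} Σ_{i,j=1}^{k+1} R(Θ,E_i,Θ,E_j)² dσ = Vol(S^k)/((k+1)(k+3)) · (‖Ric‖² + (3/2)‖R‖²), where Ric_{ij} = Σ_p R(E_p,E_i,E_p,E_j), ‖Ric‖² = Σ_{ij} Ric_{ij}², and ‖R‖² = Σ_{ijpq} R_{ijpq}². -/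
open MeasureTheory Metric
open scoped NNReal ENNReal


lemma lipsOn_proj {F : Type*} [NormedAddCommGroup F] [NormedSpace ℝ F] :
    LipschitzOnWith 2 (fun y : F => ‖y‖⁻¹ • y) {y : F | 1 ≤ ‖y‖} := by
  rw [lipschitzOnWith_iff_dist_le_mul]
  intro x hx y hy
  simp only [Set.mem_setOf_eq] at hx hy
  have hx0 : (0:ℝ) < ‖x‖ := by linarith
  have hy0 : (0:ℝ) < ‖y‖ := by linarith
  rw [dist_eq_norm, dist_eq_norm]
  have key : ‖x‖⁻¹ • x - ‖y‖⁻¹ • y = ‖x‖⁻¹ • (x - y) + (‖x‖⁻¹ - ‖y‖⁻¹) • y := by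
    rw [smul_sub, sub_smul]; abel
  rw [key]
  have hinv : ‖x‖⁻¹ * ‖x‖ = 1 := inv_mul_cancel₀ hx0.ne'
  have h1 : ‖‖x‖⁻¹ • (x - y)‖ ≤ ‖x - y‖ := by
    rw [norm_smul, Real.norm_eq_abs, abs_of_pos (by positivity)]
    nlinarith [norm_nonneg (x - y)]
  have h2 : ‖(‖x‖⁻¹ - ‖y‖⁻¹) • y‖ ≤ ‖x - y‖ := by
    rw [norm_smul, Real.norm_eq_abs]
    have e1 : ‖x‖⁻¹ - ‖y‖⁻¹ = (‖y‖ - ‖x‖) / (‖x‖ * ‖y‖) := by field_simp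
    have e2 : |‖y‖ - ‖x‖| ≤ ‖x - y‖ := by
      rw [norm_sub_rev]; exact abs_norm_sub_norm_le y x
    rw [e1, abs_div, abs_of_pos (by positivity : (0:ℝ) < ‖x‖ * ‖y‖)]
    rw [div_mul_eq_mul_div, div_le_iff₀ (by positivity)]
    have h3 : (0:ℝ) ≤ ‖x - y‖ * ‖y‖ * (‖x‖ - 1) :=
      mul_nonneg (mul_nonneg (norm_nonneg _) (norm_nonneg _)) (by linarith)
    nlinarith [mul_le_mul_of_nonneg_right e2 (norm_nonneg y)]
  refine (norm_add_le _ _).trans ?_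
  have : ((2:ℝ≥0):ℝ) = 2 := by norm_num
  rw [this]; linarith

lemma coord_le_norm {n : Type*} [Fintype n] (y : EuclideanSpace ℝ n) (i : n) :
    |y i| ≤ ‖y‖ := by
  rw [EuclideanSpace.norm_eq, ← Real.sqrt_sq_eq_abs]
  apply Real.sqrt_le_sqrt
  refine (Finset.single_le_sum (f := fun j => ‖y j‖ ^ 2) (fun j _ => by positivity)
    (Finset.mem_univ i)).trans_eq' ?_
  simp [Real.norm_eq_abs, sq_abs]

lemma sphere_hausdorff_lt_top (k : ℕ) :
    μH[(k:ℝ)] (sphere (0 : EuclideanSpace ℝ (Fin (k+1))) 1) < ⊤ := by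
  classical
  set E := EuclideanSpace ℝ (Fin (k+1))
  set D : Set (Fin k → ℝ) := closedBall 0 1 with hD
  set K : ℝ≥0 := Real.toNNReal (Real.sqrt k) with hK
  have hKcoe : (K : ℝ) = Real.sqrt k := Real.coe_toNNReal _ (Real.sqrt_nonneg _)
  set v : Fin (k+1) → ℝ → (Fin k → ℝ) → E := fun i c x => WithLp.toLp 2 (i.insertNth c x : Fin (k+1) → ℝ) with hv
  set g : Fin (k+1) → ℝ → (Fin k → ℝ) → E := fun i c x => ‖v i c x‖⁻¹ • v i c x with hg
  have hvdist : ∀ i c (x y : Fin k → ℝ), dist (v i c x) (v i c y) ≤ K * dist x y := by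
    intro i c x y
    rw [EuclideanSpace.dist_eq, Fin.sum_univ_succAbove _ i]
    simp only [hv, PiLp.toLp_apply, Fin.insertNth_apply_same, Fin.insertNth_apply_succAbove]
    rw [dist_self]
    have hb : ∀ j : Fin k, dist (x j) (y j) ^ 2 ≤ dist x y ^ 2 := by
      intro j
      have h := dist_le_pi_dist x y j
      nlinarith [(dist_nonneg : (0:ℝ) ≤ dist (x j) (y j))]
    have hsum : ∑ j : Fin k, dist (x j) (y j) ^ 2 ≤ (k:ℝ) * dist x y ^ 2 := by
      calc ∑ j : Fin k, dist (x j) (y j) ^ 2 ≤ ∑ _j : Fin k, dist x y ^ 2 :=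
            Finset.sum_le_sum fun j _ => hb j
        _ = (k:ℝ) * dist x y ^ 2 := by simp [Finset.sum_const, mul_comm]
    calc √((0:ℝ)^2 + ∑ j : Fin k, dist (x j) (y j) ^ 2)
        ≤ √((k:ℝ) * dist x y ^ 2) := by apply Real.sqrt_le_sqrt; nlinarith
      _ = √(k:ℝ) * dist x y := by
          rw [Real.sqrt_mul (by positivity), Real.sqrt_sq dist_nonneg]
      _ = K * dist x y := by rw [hKcoe]
  have hvlip : ∀ i c, LipschitzWith K (v i c) := fun i c =>
    LipschitzWith.of_dist_le_mul (hvdist i c)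
  have hvmem : ∀ i (c : ℝ), |c| = 1 → ∀ x, v i c x ∈ {y : E | 1 ≤ ‖y‖} := by
    intro i c hc x
    have h := coord_le_norm (v i c x) i
    have h2 : v i c x i = c := by simp [hv, Fin.insertNth_apply_same]
    rw [h2, hc] at h
    exact h
  have hglip : ∀ i (c : ℝ), |c| = 1 → LipschitzOnWith (2 * K) (g i c) D :=
    fun i c hc => (lipsOn_proj (F := E)).comp ((hvlip i c).lipschitzOnWith (s := D))
      (fun x _ => hvmem i c hc x)
  have himg : ∀ i (c : ℝ), |c| = 1 → μH[(k:ℝ)] (g i c '' D) < ⊤ := by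
    intro i c hc
    have h1 := (hglip i c hc).hausdorffMeasure_image_le (d := (k:ℝ)) (Nat.cast_nonneg k)
    have h2 : μH[(k:ℝ)] D < ⊤ := by
      have hvol : (μH[(k:ℝ)] : Measure (Fin k → ℝ)) = volume := by
        have h := MeasureTheory.hausdorffMeasure_pi_real (ι := Fin k)
        simpa using h
      rw [hvol]
      exact (isCompact_closedBall 0 1).measure_lt_top
    refine lt_of_le_of_lt h1 ?_
    exact ENNReal.mul_lt_top (ENNReal.rpow_lt_top_of_nonneg (Nat.cast_nonneg k) ENNReal.coe_ne_top) h2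
  have hcover : sphere (0 : E) 1 ⊆ ⋃ i : Fin (k+1), (g i 1 '' D ∪ g i (-1) '' D) := by
    intro θ hθ
    have hθn : ‖θ‖ = 1 := by simpa using hθ
    obtain ⟨i, -, hi⟩ := Finset.exists_max_image Finset.univ (fun i => |θ i|)
      ⟨0, Finset.mem_univ 0⟩
    have hipos : 0 < |θ i| := by
      by_contra h
      push_neg at h
      have hz : θ = 0 := by
        ext j
        have h1 := (hi j (Finset.mem_univ j)).trans h
        simpa [abs_nonpos_iff] using h1
      rw [hz] at hθn; simp at hθn
    set c : ℝ := θ i / |θ i| with hcdef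
    have hc : |c| = 1 := by
      rw [hcdef, abs_div, abs_abs, div_self (ne_of_gt hipos)]
    set x : Fin k → ℝ := fun j => θ (i.succAbove j) / |θ i| with hx
    have hxD : x ∈ D := by
      rw [hD, mem_closedBall, dist_pi_le_iff zero_le_one]
      intro j
      simp only [Real.dist_eq, Pi.zero_apply, sub_zero, hx]
      rw [abs_div, abs_abs, div_le_one hipos]
      exact hi _ (Finset.mem_univ _)
    have hvx : v i c x = |θ i|⁻¹ • θ := by
      ext j
      rcases eq_or_ne j i with rfl | hne
      · show (j.insertNth c x : Fin (k+1) → ℝ) j = _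
        rw [Fin.insertNth_apply_same]
        show c = |θ j|⁻¹ * θ j
        rw [hcdef]; ring
      · obtain ⟨j', rfl⟩ := Fin.exists_succAbove_eq hne
        show (i.insertNth c x : Fin (k+1) → ℝ) (i.succAbove j') = _
        rw [Fin.insertNth_apply_succAbove]
        show x j' = |θ i|⁻¹ * θ (i.succAbove j')
        rw [hx]; ring
    have hnvx : ‖v i c x‖ = |θ i|⁻¹ := by
      rw [hvx, norm_smul, Real.norm_eq_abs, abs_of_pos (by positivity), hθn, mul_one]
    have hgx : g i c x = θ := by
      show ‖v i c x‖⁻¹ • v i c x = θ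
      rw [hnvx, hvx, inv_inv, smul_smul, mul_inv_cancel₀ (ne_of_gt hipos), one_smul]
    rcases (abs_eq (by norm_num : (0:ℝ) ≤ 1)).mp hc with h1 | h1
    · exact Set.mem_iUnion.mpr ⟨i, Or.inl ⟨x, hxD, by rw [← h1]; exact hgx⟩⟩
    · exact Set.mem_iUnion.mpr ⟨i, Or.inr ⟨x, hxD, by rw [← h1]; exact hgx⟩⟩
  refine lt_of_le_of_lt ((measure_mono hcover).trans (measure_iUnion_fintype_le _ _)) ?_
  apply ENNReal.sum_lt_top.mpr
  intro i _
  exact lt_of_le_of_lt (measure_union_le _ _)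
    (ENNReal.add_lt_top.mpr ⟨himg i 1 (by norm_num), himg i (-1) (by norm_num)⟩)

section SPH
variable {k : ℕ}

abbrev Esp (k : ℕ) := EuclideanSpace ℝ (Fin (k+1))

noncomputable def sI (k : ℕ) (f : Esp k → ℝ) : ℝ :=
  ∫ θ in sphere (0 : Esp k) 1, f θ ∂μH[(k:ℝ)]


lemma sph_integrable {f : Esp k → ℝ} (hf : Continuous f) :
    IntegrableOn f (sphere (0 : Esp k) 1) μH[(k:ℝ)] := by
  haveI : IsFiniteMeasure ((μH[(k:ℝ)] : Measure (Esp k)).restrict (sphere 0 1)) :=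
    ⟨by rw [Measure.restrict_apply_univ]; exact sphere_hausdorff_lt_top k⟩
  obtain ⟨C, hC⟩ := (isCompact_sphere (0 : Esp k) 1).exists_bound_of_continuousOn hf.continuousOn
  exact Integrable.mono' (integrable_const C) hf.aestronglyMeasurable
    (((ae_restrict_iff' isClosed_sphere.measurableSet).mpr (ae_of_all _ fun x hx => hC x hx)))

lemma sI_add {f g : Esp k → ℝ} (hf : Continuous f) (hg : Continuous g) :
    sI k (fun θ => f θ + g θ) = sI k f + sI k g :=
  integral_add (sph_integrable hf) (sph_integrable hg)

lemma sI_sum {ι : Type*} (s : Finset ι) (f : ι → Esp k → ℝ) (hf : ∀ i, Continuous (f i)) :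
    sI k (fun θ => ∑ i ∈ s, f i θ) = ∑ i ∈ s, sI k (f i) :=
  integral_finset_sum s (fun i _ => sph_integrable (hf i))

lemma sI_cmul (c : ℝ) (f : Esp k → ℝ) : sI k (fun θ => c * f θ) = c * sI k f :=
  integral_const_mul c f

lemma sI_congr {f g : Esp k → ℝ} (h : ∀ θ ∈ sphere (0 : Esp k) 1, f θ = g θ) :
    sI k f = sI k g :=
  setIntegral_congr_fun isClosed_sphere.measurableSet h

lemma sI_const (c : ℝ) : sI k (fun _ => c) =
    (μH[(k:ℝ)] (sphere (0 : Esp k) 1)).toReal * c := by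
  rw [sI, setIntegral_const, smul_eq_mul]; rfl

lemma sphere_sum_sq {θ : Esp k} (hθ : θ ∈ sphere (0 : Esp k) 1) :
    ∑ i, θ i ^ 2 = 1 := by
  have h : ‖θ‖ = 1 := by simpa using hθ
  rw [EuclideanSpace.norm_eq] at h
  have h2 : ∑ i, ‖θ i‖ ^ 2 = 1 := Real.sqrt_eq_one.mp h
  simpa [Real.norm_eq_abs, sq_abs] using h2

lemma sI_isometry (e : Esp k ≃ᵢ Esp k) (he : e 0 = 0) (f : Esp k → ℝ)
    (hf : Continuous f) : sI k (fun θ => f (e θ)) = sI k f := by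
  have hpre : (⇑e) ⁻¹' (sphere (0 : Esp k) 1) = sphere (0 : Esp k) 1 := by
    ext x
    simp only [Set.mem_preimage, mem_sphere]
    conv_lhs => rw [← he]
    rw [e.dist_eq]
  have hmap : Measure.map (⇑e) ((μH[(k:ℝ)] : Measure (Esp k)).restrict (sphere 0 1))
      = (μH[(k:ℝ)] : Measure (Esp k)).restrict (sphere 0 1) := by
    conv_lhs => rw [← hpre]
    rw [← Measure.restrict_map e.continuous.measurable isClosed_sphere.measurableSet,
      e.map_hausdorffMeasure]
  refine Eq.symm ?_
  calc sI k f = ∫ θ, f θ ∂(Measure.map (⇑e) ((μH[(k:ℝ)] : Measure (Esp k)).restrict (sphere 0 1))) := by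
        rw [hmap]; rfl
    _ = ∫ θ in sphere (0 : Esp k) 1, f (e θ) ∂μH[(k:ℝ)] := by
        rw [integral_map e.continuous.measurable.aemeasurable]
        rw [hmap]
        exact hf.aestronglyMeasurable
    _ = sI k (fun θ => f (e θ)) := rfl


-- permutation isometry
noncomputable def permIso (σ : Equiv.Perm (Fin (k+1))) : Esp k ≃ᵢ Esp k where
  toEquiv :=
    { toFun := fun x => WithLp.toLp 2 (fun i => x (σ i) : Fin (k+1) → ℝ)
      invFun := fun x => WithLp.toLp 2 (fun i => x (σ.symm i) : Fin (k+1) → ℝ)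
      left_inv := fun x => PiLp.ext fun i => congrArg x (σ.apply_symm_apply i)
      right_inv := fun x => PiLp.ext fun i => congrArg x (σ.symm_apply_apply i) }
  isometry_toFun := Isometry.of_dist_eq fun x y => by
    show dist (α := Esp k) (WithLp.toLp 2 fun i => x (σ i)) (WithLp.toLp 2 fun i => y (σ i)) = _
    rw [EuclideanSpace.dist_eq (𝕜 := ℝ), EuclideanSpace.dist_eq (𝕜 := ℝ)]
    congr 1
    exact Equiv.sum_comp σ (fun i => dist (x i) (y i) ^ 2)

lemma permIso_zero (σ : Equiv.Perm (Fin (k+1))) : permIso σ (0 : Esp k) = 0 := rfl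

lemma permIso_apply (σ : Equiv.Perm (Fin (k+1))) (x : Esp k) (i : Fin (k+1)) :
    permIso σ x i = x (σ i) := rfl

-- sign flip isometry
noncomputable def flipFun (a : Fin (k+1)) : Esp k → Esp k :=
  fun x => WithLp.toLp 2 (fun i => if i = a then -x i else x i : Fin (k+1) → ℝ)

lemma flipFun_apply (a : Fin (k+1)) (x : Esp k) (i : Fin (k+1)) :
    flipFun a x i = if i = a then -x i else x i := rfl

lemma flipFun_inv (a : Fin (k+1)) : Function.Involutive (flipFun (k := k) a) := by
  intro x
  ext i
  rw [show flipFun a (flipFun a x) i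
      = if i = a then -(flipFun a x i) else flipFun a x i from rfl, flipFun_apply]
  by_cases h : i = a <;> simp [h]

lemma flipFun_dist (a : Fin (k+1)) (x y : Esp k) :
    dist (flipFun a x) (flipFun a y) = dist x y := by
  rw [EuclideanSpace.dist_eq, EuclideanSpace.dist_eq]
  congr 1
  apply Finset.sum_congr rfl
  intro i _
  rw [show flipFun a x i = if i = a then -x i else x i from rfl,
    show flipFun a y i = if i = a then -y i else y i from rfl]
  by_cases h : i = a <;> simp [h]

noncomputable def flipIso (a : Fin (k+1)) : Esp k ≃ᵢ Esp k where
  toEquiv := (flipFun_inv a).toPerm _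
  isometry_toFun := Isometry.of_dist_eq fun x y => flipFun_dist a x y

lemma flipIso_zero (a : Fin (k+1)) : flipIso a (0 : Esp k) = 0 := by
  show flipFun a 0 = 0
  ext i
  rw [flipFun_apply]
  by_cases h : i = a <;> simp [h]

lemma flipIso_apply (a : Fin (k+1)) (x : Esp k) (i : Fin (k+1)) :
    flipIso a x i = (if i = a then (-1:ℝ) else 1) * x i := by
  show flipFun a x i = _
  rw [flipFun_apply]
  by_cases h : i = a <;> simp [h]

-- rotation by 45 degrees in coordinates a b
noncomputable def rotFun (a b : Fin (k+1)) : Esp k → Esp k :=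
  fun x => WithLp.toLp 2 (fun i => if i = a then (x a + x b)/√2 else if i = b then (x a - x b)/√2 else x i
    : Fin (k+1) → ℝ)

lemma rotFun_apply (a b : Fin (k+1)) (x : Esp k) (i : Fin (k+1)) :
    rotFun a b x i
      = if i = a then (x a + x b)/√2 else if i = b then (x a - x b)/√2 else x i := rfl

lemma sqrt2_mul_self : (√2 : ℝ) * √2 = 2 := Real.mul_self_sqrt (by norm_num)

lemma rotFun_a (a b : Fin (k+1)) (x : Esp k) : rotFun a b x a = (x a + x b)/√2 := by
  rw [rotFun_apply, if_pos rfl]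

lemma rotFun_b (a b : Fin (k+1)) (hab : a ≠ b) (x : Esp k) :
    rotFun a b x b = (x a - x b)/√2 := by
  rw [rotFun_apply, if_neg hab.symm, if_pos rfl]

lemma rotFun_inv (a b : Fin (k+1)) (hab : a ≠ b) : Function.Involutive (rotFun (k := k) a b) := by
  intro x
  have hs := sqrt2_mul_self
  ext i
  rw [show rotFun a b (rotFun a b x) i
      = if i = a then (rotFun a b x a + rotFun a b x b)/√2
        else if i = b then (rotFun a b x a - rotFun a b x b)/√2
        else rotFun a b x i from rfl,
    rotFun_a, rotFun_b a b hab]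
  by_cases hia : i = a
  · rw [if_pos hia, hia]
    rw [← add_div, div_div,
      show (x a + x b + (x a - x b)) = 2 * x a by ring, hs]
    ring
  · rw [if_neg hia]
    by_cases hib : i = b
    · rw [if_pos hib, hib]
      rw [← sub_div, div_div,
        show (x a + x b - (x a - x b)) = 2 * x b by ring, hs]
      ring
    · rw [if_neg hib, rotFun_apply, if_neg hia, if_neg hib]

lemma sum_split_two {n : ℕ} (a b : Fin n) (hab : a ≠ b) (F : Fin n → ℝ) :
    ∑ i, F i = F a + F b + ∑ i ∈ (Finset.univ \ ({a, b} : Finset (Fin n))), F i := by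
  rw [Finset.sum_eq_sum_sdiff_singleton_add (Finset.mem_univ a) F]
  have hb : b ∈ Finset.univ \ ({a} : Finset (Fin n)) := by simp [hab.symm]
  rw [Finset.sum_eq_sum_sdiff_singleton_add hb F]
  have hset : ((Finset.univ \ ({a} : Finset (Fin n))) \ ({b} : Finset (Fin n)))
      = (Finset.univ \ ({a, b} : Finset (Fin n))) := by
    ext i; simp [and_comm]
  rw [hset]; ring

lemma rotFun_dist (a b : Fin (k+1)) (hab : a ≠ b) (x y : Esp k) :
    dist (rotFun a b x) (rotFun a b y) = dist x y := by
  have hs : ((√2 : ℝ))^2 = 2 := Real.sq_sqrt (by norm_num)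
  rw [EuclideanSpace.dist_eq, EuclideanSpace.dist_eq]
  congr 1
  rw [sum_split_two a b hab (fun i => dist (rotFun a b x i) (rotFun a b y i) ^ 2),
    sum_split_two a b hab (fun i => dist (x i) (y i) ^ 2)]
  have htail : ∑ i ∈ (Finset.univ \ ({a, b} : Finset (Fin (k+1)))),
      dist (rotFun a b x i) (rotFun a b y i) ^ 2 =
      ∑ i ∈ (Finset.univ \ ({a, b} : Finset (Fin (k+1)))), dist (x i) (y i) ^ 2 := by
    apply Finset.sum_congr rfl
    intro i hi
    simp only [Finset.mem_sdiff, Finset.mem_univ, Finset.mem_insert,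
      Finset.mem_singleton, true_and] at hi
    push_neg at hi
    rw [rotFun_apply, rotFun_apply, if_neg hi.1, if_neg hi.1, if_neg hi.2, if_neg hi.2]
  rw [htail]
  rw [rotFun_a, rotFun_b a b hab, rotFun_a, rotFun_b a b hab]
  simp only [Real.dist_eq, sq_abs]
  have e1 : (x a + x b)/√2 - (y a + y b)/√2 = ((x a - y a) + (x b - y b))/√2 := by ring
  have e2 : (x a - x b)/√2 - (y a - y b)/√2 = ((x a - y a) - (x b - y b))/√2 := by ring
  rw [e1, e2, div_pow, div_pow, hs]
  ring

noncomputable def rotIso (a b : Fin (k+1)) (hab : a ≠ b) : Esp k ≃ᵢ Esp k where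
  toEquiv := (rotFun_inv a b hab).toPerm _
  isometry_toFun := Isometry.of_dist_eq fun x y => rotFun_dist a b hab x y

lemma rotIso_zero (a b : Fin (k+1)) (hab : a ≠ b) : rotIso a b hab (0 : Esp k) = 0 := by
  show rotFun a b 0 = 0
  ext i
  rw [rotFun_apply]
  by_cases h : i = a <;> by_cases h' : i = b <;> simp [h, h']

lemma rotIso_apply (a b : Fin (k+1)) (hab : a ≠ b) (x : Esp k) (i : Fin (k+1)) :
    rotIso a b hab x i
      = if i = a then (x a + x b)/√2 else if i = b then (x a - x b)/√2 else x i :=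
  rotFun_apply a b x i

noncomputable def Mo (k : ℕ) (p q r s : Fin (k+1)) : ℝ :=
  sI k fun θ => θ p * θ q * θ r * θ s

noncomputable def sVol (k : ℕ) : ℝ := (μH[(k:ℝ)] (sphere (0 : Esp k) 1)).toReal

lemma contC (p : Fin (k+1)) : Continuous fun θ : Esp k => θ p := by fun_prop

lemma contM (p q r s : Fin (k+1)) :
    Continuous fun θ : Esp k => θ p * θ q * θ r * θ s := by fun_prop

lemma Mo_reorder {p q r s p' q' r' s' : Fin (k+1)}
    (h : ∀ t : Fin (k+1) → ℝ, t p * t q * t r * t s = t p' * t q' * t r' * t s') :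
    Mo k p q r s = Mo k p' q' r' s' :=
  congrArg (sI k) (funext fun θ => h θ)

lemma Mo_perm (σ : Equiv.Perm (Fin (k+1))) (p q r s : Fin (k+1)) :
    Mo k (σ p) (σ q) (σ r) (σ s) = Mo k p q r s := by
  have h := sI_isometry (permIso σ) (permIso_zero σ)
    (fun θ => θ p * θ q * θ r * θ s) (contM p q r s)
  have h2 : (fun θ : Esp k => (permIso σ θ) p * (permIso σ θ) q * (permIso σ θ) r
      * (permIso σ θ) s) = fun θ : Esp k => θ (σ p) * θ (σ q) * θ (σ r) * θ (σ s) := by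
    funext θ
    rw [permIso_apply, permIso_apply, permIso_apply, permIso_apply]
  rw [Mo, Mo, ← h, h2]

lemma Mo_flip (a p q r s : Fin (k+1))
    (hsgn : (if p = a then (-1:ℝ) else 1) * (if q = a then (-1:ℝ) else 1)
      * (if r = a then (-1:ℝ) else 1) * (if s = a then (-1:ℝ) else 1) = -1) :
    Mo k p q r s = 0 := by
  have h := sI_isometry (flipIso a) (flipIso_zero a)
    (fun θ => θ p * θ q * θ r * θ s) (contM p q r s)
  have h2 : (fun θ : Esp k => (flipIso a θ) p * (flipIso a θ) q * (flipIso a θ) r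
      * (flipIso a θ) s) = fun θ : Esp k =>
        ((if p = a then (-1:ℝ) else 1) * (if q = a then (-1:ℝ) else 1)
          * (if r = a then (-1:ℝ) else 1) * (if s = a then (-1:ℝ) else 1))
          * (θ p * θ q * θ r * θ s) := by
    funext θ
    rw [flipIso_apply, flipIso_apply, flipIso_apply, flipIso_apply]
    ring
  rw [h2, hsgn] at h
  have h3 : sI k (fun θ : Esp k => (-1:ℝ) * (θ p * θ q * θ r * θ s))
      = -1 * Mo k p q r s := sI_cmul (-1) _
  rw [h3] at h
  have : Mo k p q r s = -1 * Mo k p q r s := h.symm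
  linarith

lemma Mo_diag (p a : Fin (k+1)) : Mo k p p p p = Mo k a a a a := by
  have h := Mo_perm (k := k) (Equiv.swap a p) a a a a
  rwa [Equiv.swap_apply_left] at h

lemma Mo_pair {p q a b : Fin (k+1)} (hpq : p ≠ q) (hab : a ≠ b) :
    Mo k p p q q = Mo k a a b b := by
  classical
  set τ := Equiv.swap a p with hτ
  have hca : τ q ≠ a := by
    intro h
    apply hpq
    have h2 := congrArg τ h
    rw [Equiv.swap_apply_self, Equiv.swap_apply_left] at h2
    exact h2.symm ▸ rfl
  set ρ := Equiv.swap b (τ q) with hρ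
  have hσa : τ (ρ a) = p := by
    rw [hρ, Equiv.swap_apply_of_ne_of_ne hab (fun h => hca h.symm), hτ,
      Equiv.swap_apply_left]
  have hσb : τ (ρ b) = q := by
    rw [hρ, Equiv.swap_apply_left, hτ, Equiv.swap_apply_self]
  have h := Mo_perm (k := k) (ρ.trans τ) a a b b
  simp only [Equiv.trans_apply] at h
  rw [hσa, hσb] at h
  exact h

lemma Mo_rot {a b : Fin (k+1)} (hab : a ≠ b) :
    Mo k a a a a = 3 * Mo k a a b b := by
  have h := sI_isometry (rotIso a b hab) (rotIso_zero a b hab)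
    (fun θ => θ a * θ a * θ a * θ a) (contM a a a a)
  have hs := Real.mul_self_sqrt (by norm_num : (0:ℝ) ≤ 2)
  have h2 : (fun θ : Esp k => (rotIso a b hab θ) a * (rotIso a b hab θ) a
      * (rotIso a b hab θ) a * (rotIso a b hab θ) a)
      = fun θ : Esp k => (1/4) * (θ a * θ a * θ a * θ a)
        + ((θ a * θ a * θ a * θ b)
        + ((3/2) * (θ a * θ a * θ b * θ b)
        + ((θ a * θ b * θ b * θ b)
        + (1/4) * (θ b * θ b * θ b * θ b)))) := by
    funext θ
    rw [rotIso_apply a b hab θ a, if_pos rfl]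
    have expand : (θ a + θ b)/√2 * ((θ a + θ b)/√2) * ((θ a + θ b)/√2) * ((θ a + θ b)/√2)
        = ((θ a + θ b) * (θ a + θ b) * (θ a + θ b) * (θ a + θ b)) / ((√2*√2) * (√2*√2)) := by
      ring
    rw [expand, hs]
    ring
  rw [h2] at h
  rw [sI_add (by fun_prop) (by fun_prop), sI_add (by fun_prop) (by fun_prop),
    sI_add (by fun_prop) (by fun_prop), sI_add (by fun_prop) (by fun_prop),
    sI_cmul, sI_cmul, sI_cmul] at h
  have hb1 : sI k (fun θ : Esp k => θ a * θ a * θ a * θ b) = 0 :=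
    Mo_flip b a a a b (by simp [hab])
  have hb2 : sI k (fun θ : Esp k => θ a * θ b * θ b * θ b) = 0 :=
    Mo_flip a a b b b (by simp [hab.symm])
  have hb3 : sI k (fun θ : Esp k => θ b * θ b * θ b * θ b) = Mo k a a a a :=
    Mo_diag b a
  rw [hb1, hb2, hb3] at h
  have hrhs : sI k (fun θ : Esp k => θ a * θ a * θ a * θ a) = Mo k a a a a := rfl
  rw [hrhs] at h
  have hB : sI k (fun θ : Esp k => θ a * θ a * θ b * θ b) = Mo k a a b b := rfl
  rw [hB] at h
  linarith

lemma sum_Mo_pair (p : Fin (k+1)) :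
    ∑ q, Mo k p p q q = sI k (fun θ : Esp k => θ p * θ p) := by
  simp only [Mo]
  rw [← sI_sum Finset.univ (fun q θ => θ p * θ p * θ q * θ q) (fun q => contM p p q q)]
  apply sI_congr
  intro θ hθ
  have : ∑ q, θ p * θ p * θ q * θ q = θ p * θ p * ∑ q, θ q ^ 2 := by
    rw [Finset.mul_sum]
    apply Finset.sum_congr rfl
    intro q _
    ring
  rw [this, sphere_sum_sq hθ, mul_one]

lemma sum_M2 : ∑ p, sI k (fun θ : Esp k => θ p * θ p) = sVol k := by
  rw [← sI_sum Finset.univ (fun p θ => θ p * θ p) (fun p => by fun_prop)]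
  have h : sI k (fun θ : Esp k => ∑ p, θ p * θ p) = sI k (fun _ => (1:ℝ)) := by
    apply sI_congr
    intro θ hθ
    have : ∑ p, θ p * θ p = ∑ p, θ p ^ 2 := by
      apply Finset.sum_congr rfl; intro p _; ring
    rw [this, sphere_sum_sq hθ]
  rw [h, sI_const, mul_one, sVol]

lemma B_val {a b : Fin (k+1)} (hab : a ≠ b) :
    ((k:ℝ)+1) * ((k:ℝ)+3) * Mo k a a b b = sVol k := by
  classical
  have hsum : ∀ p : Fin (k+1), ∑ q, Mo k p p q q = ((k:ℝ)+3) * Mo k a a b b := by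
    intro p
    have hval : ∀ q : Fin (k+1), Mo k p p q q
        = Mo k a a b b + (if q = p then 2 * Mo k a a b b else 0) := by
      intro q
      by_cases h : q = p
      · subst h
        rw [Mo_diag q a, Mo_rot hab]
        simp; ring
      · rw [Mo_pair (Ne.symm h) hab]
        simp [h]
    calc ∑ q, Mo k p p q q
        = ∑ q : Fin (k+1), (Mo k a a b b + (if q = p then 2 * Mo k a a b b else 0)) :=
          Finset.sum_congr rfl fun q _ => hval q
      _ = ((k:ℝ)+1) * Mo k a a b b + 2 * Mo k a a b b := by
          rw [Finset.sum_add_distrib, Finset.sum_const, Finset.sum_ite_eq' Finset.univ p]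
          simp [Finset.card_univ, mul_comm]
      _ = ((k:ℝ)+3) * Mo k a a b b := by ring
  have h2 : ∑ p : Fin (k+1), (((k:ℝ)+3) * Mo k a a b b) = sVol k := by
    rw [← sum_M2 (k := k)]
    apply Finset.sum_congr rfl
    intro p _
    rw [← hsum p, sum_Mo_pair p]
  rw [← h2, Finset.sum_const, Finset.card_univ]
  simp
  ring

-- the master moment formula
lemma Mo_master {a b : Fin (k+1)} (hab : a ≠ b) (p q r s : Fin (k+1)) :
    Mo k p q r s = Mo k a a b b *
      ((if p = q then (1:ℝ) else 0) * (if r = s then (1:ℝ) else 0)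
        + (if p = r then (1:ℝ) else 0) * (if q = s then (1:ℝ) else 0)
        + (if p = s then (1:ℝ) else 0) * (if q = r then (1:ℝ) else 0)) := by
  classical
  by_cases hpq : p = q
  · subst hpq
    by_cases hrs : r = s
    · subst hrs
      by_cases hpr : p = r
      · subst hpr
        rw [Mo_diag p a, Mo_rot hab]
        simp
        ring
      · rw [Mo_pair hpr hab]
        simp [hpr]
    · by_cases hrp : r = p
      · subst hrp
        -- (r, r, r, s) with s ≠ r
        rw [Mo_flip s r r r s (by simp [hrs, Ne.symm hrs])]
        simp [hrs, Ne.symm hrs]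
      · -- (p, p, r, s), r ≠ p, r ≠ s : r appears once
        have h1 : p ≠ r := fun h => hrp h.symm
        have h2 : s ≠ r := fun h => hrs h.symm
        rw [Mo_flip r p p r s (by simp [h1, h2])]
        simp [hrs, h1, hrp]
  · by_cases hpr : p = r
    · subst hpr
      by_cases hqs : q = s
      · subst hqs
        -- (p, q, p, q)
        rw [Mo_reorder (fun t => by ring : ∀ t : Fin (k+1) → ℝ,
          t p * t q * t p * t q = t p * t p * t q * t q), Mo_pair hpq hab]
        simp [hpq]
      · -- (p, q, p, s) with q ≠ p, q ≠ s : q appears once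
        have h1 : p ≠ q := hpq
        have h2 : s ≠ q := fun h => hqs h.symm
        have h3 : q ≠ p := fun h => hpq h.symm
        rw [Mo_flip q p q p s (by simp [h1, h2])]
        simp [hpq, hqs, h1, h3]
    · by_cases hps : p = s
      · subst hps
        by_cases hqr : q = r
        · subst hqr
          rw [Mo_reorder (fun t => by ring : ∀ t : Fin (k+1) → ℝ,
            t p * t q * t q * t p = t p * t p * t q * t q), Mo_pair hpq hab]
          simp [hpq, hpr]
        · -- (p, q, r, p) with q ≠ p, q ≠ r : q appears once
          have h1 : p ≠ q := hpq
          have h2 : r ≠ q := fun h => hqr h.symm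
          rw [Mo_flip q p q r p (by simp [h1, h2])]
          simp [hpq, hqr, h1, hpr]
      · -- p different from q, r, s : p appears once
        rw [Mo_flip p p q r s (by simp [Ne.symm hpq, Ne.symm hpr, Ne.symm hps])]
        simp [hpq, hpr, hps]


lemma Mo_def (k : ℕ) (p q r s : Fin (k+1)) :
    Mo k p q r s = sI k fun θ => θ p * θ q * θ r * θ s := rfl

lemma sVol_def (k : ℕ) : sVol k = (μH[(k:ℝ)] (sphere (0 : Esp k) 1)).toReal := rfl

lemma sI_def (k : ℕ) (f : Esp k → ℝ) :
    sI k f = ∫ θ in sphere (0 : Esp k) 1, f θ ∂μH[(k:ℝ)] := rfl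

end SPH

section ALG
variable {n : ℕ}

lemma curv_half (R : Fin n → Fin n → Fin n → Fin n → ℝ)
    (hanti₂ : ∀ i j p q, R i j p q = -R i j q p)
    (hpair : ∀ i j p q, R i j p q = R p q i j)
    (hbianchi : ∀ i j p q, R i j p q + R i p q j + R i q j p = 0) :
    ∑ a, ∑ b, ∑ c, ∑ d, R a b c d * R c b a d
      = (1/2) * ∑ a, ∑ b, ∑ c, ∑ d, (R a b c d)^2 := by
  set A := ∑ a, ∑ b, ∑ c, ∑ d, (R a b c d)^2 with hA
  set T := ∑ a, ∑ b, ∑ c, ∑ d, R a b c d * R a d c b with hT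
  have h1 : ∑ a, ∑ b, ∑ c, ∑ d, R a b c d * R c b a d = T := by
    rw [hT]
    refine Finset.sum_congr rfl fun a _ => Finset.sum_congr rfl fun b _ =>
      Finset.sum_congr rfl fun c _ => Finset.sum_congr rfl fun d _ => ?_
    rw [hpair c b a d]
  have h2 : T = ∑ a, ∑ b, ∑ c, ∑ d, R a b c d * R a c b d := by
    rw [hT]
    refine Finset.sum_congr rfl fun a _ => Finset.sum_congr rfl fun b _ => ?_
    rw [Finset.sum_comm]
    refine Finset.sum_congr rfl fun c _ => Finset.sum_congr rfl fun d _ => ?_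
    rw [hanti₂ a b d c, hanti₂ a c d b]
    ring
  have h3 : ∑ a, ∑ b, ∑ c, ∑ d, R a b c d * R a c b d = A - T := by
    have hsub : ∀ a b c d : Fin n, R a c b d = R a b c d - R a d c b := by
      intro a b c d
      have hb := hbianchi a c b d
      have h4 := hanti₂ a b d c
      linarith
    calc ∑ a, ∑ b, ∑ c, ∑ d, R a b c d * R a c b d
        = ∑ a, ∑ b, ∑ c, ∑ d, ((R a b c d)^2 - R a b c d * R a d c b) := by
          refine Finset.sum_congr rfl fun a _ => Finset.sum_congr rfl fun b _ =>
            Finset.sum_congr rfl fun c _ => Finset.sum_congr rfl fun d _ => ?_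
          rw [hsub a b c d]
          ring
      _ = A - T := by
          rw [hA, hT]
          simp only [Finset.sum_sub_distrib]
  linarith [h1, h2, h3]

lemma sum4_reorder (g : Fin n → Fin n → Fin n → Fin n → ℝ) :
    ∑ i, ∑ j, ∑ p, ∑ q, g i j p q = ∑ p, ∑ i, ∑ q, ∑ j, g i j p q := by
  calc ∑ i, ∑ j, ∑ p, ∑ q, g i j p q
      = ∑ i, ∑ p, ∑ j, ∑ q, g i j p q :=
        Finset.sum_congr rfl fun i _ => Finset.sum_comm
    _ = ∑ p, ∑ i, ∑ j, ∑ q, g i j p q := Finset.sum_comm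
    _ = ∑ p, ∑ i, ∑ q, ∑ j, g i j p q :=
        Finset.sum_congr rfl fun p _ => Finset.sum_congr rfl fun i _ => Finset.sum_comm

lemma sum4_delta (c : Fin n → Fin n → Fin n → Fin n → ℝ) (B : ℝ) :
    ∑ p, ∑ q, ∑ r, ∑ s, c p q r s * (B *
      ((if p = q then (1:ℝ) else 0) * (if r = s then (1:ℝ) else 0)
        + (if p = r then (1:ℝ) else 0) * (if q = s then (1:ℝ) else 0)
        + (if p = s then (1:ℝ) else 0) * (if q = r then (1:ℝ) else 0)))
    = B * ((∑ p, ∑ r, c p p r r) + ((∑ p, ∑ q, c p q p q) + (∑ p, ∑ q, c p q q p))) := by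
  classical
  simp only [mul_add, Finset.sum_add_distrib, mul_ite, ite_mul, mul_zero, zero_mul,
    mul_one, one_mul, Finset.sum_ite_irrel, Finset.sum_const_zero, Finset.sum_ite_eq,
    Finset.sum_ite_eq', Finset.mem_univ, if_true, Finset.mul_sum]
  simp only [mul_comm B]
  rw [add_assoc]

end ALG

theorem main_aux (k : ℕ) (a b : Fin (k+1)) (hab : a ≠ b)
    (R : Fin (k+1) → Fin (k+1) → Fin (k+1) → Fin (k+1) → ℝ)
    (hanti₂ : ∀ i j p q, R i j p q = -R i j q p)
    (hpair : ∀ i j p q, R i j p q = R p q i j)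
    (hbianchi : ∀ i j p q, R i j p q + R i p q j + R i q j p = 0) :
    ∫ θ in sphere (0 : EuclideanSpace ℝ (Fin (k+1))) 1,
        (∑ i, ∑ j, (∑ p, ∑ q, θ p * θ q * R p i q j) ^ 2) ∂μH[k] =
      (μH[k] (sphere (0 : EuclideanSpace ℝ (Fin (k+1))) 1)).toReal / ((k + 1) * (k + 3)) *
        ((∑ i, ∑ j, (∑ p, R p i p j) ^ 2) +
          3 / 2 * ∑ i, ∑ j, ∑ p, ∑ q, (R i j p q) ^ 2) := by
  have hB := B_val (k := k) hab
  -- Step 1: integral = iterated moment sums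
  have step1 : (∫ θ in sphere (0 : EuclideanSpace ℝ (Fin (k+1))) 1,
      (∑ i, ∑ j, (∑ p, ∑ q, θ p * θ q * R p i q j) ^ 2) ∂μH[k])
      = ∑ i, ∑ j, ∑ p, ∑ q, ∑ r, ∑ s, (R p i q j * R r i s j) * Mo k p q r s := by
    have h0 : (∫ θ in sphere (0 : EuclideanSpace ℝ (Fin (k+1))) 1,
        (∑ i, ∑ j, (∑ p, ∑ q, θ p * θ q * R p i q j) ^ 2) ∂μH[k])
        = sI k (fun θ => ∑ i, ∑ j, (∑ p, ∑ q, θ p * θ q * R p i q j) ^ 2) :=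
      (sI_def k _).symm
    rw [h0, sI_sum Finset.univ
      (fun i θ => ∑ j, (∑ p, ∑ q, θ p * θ q * R p i q j) ^ 2) (fun i => by fun_prop)]
    refine Finset.sum_congr rfl fun i _ => ?_
    rw [sI_sum Finset.univ
      (fun j θ => (∑ p, ∑ q, θ p * θ q * R p i q j) ^ 2) (fun j => by fun_prop)]
    refine Finset.sum_congr rfl fun j _ => ?_
    have hpoint : (fun θ : Esp k => (∑ p, ∑ q, θ p * θ q * R p i q j) ^ 2)
        = fun θ : Esp k => ∑ p, ∑ q, ∑ r, ∑ s,
            (R p i q j * R r i s j) * (θ p * θ q * θ r * θ s) := by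
      funext θ
      rw [pow_two, Finset.sum_mul_sum]
      refine Finset.sum_congr rfl fun p _ => ?_
      simp only [Finset.sum_mul_sum]
      rw [Finset.sum_comm]
      refine Finset.sum_congr rfl fun q _ => Finset.sum_congr rfl fun r _ =>
        Finset.sum_congr rfl fun s _ => ?_
      ring
    rw [hpoint]
    rw [sI_sum Finset.univ (fun p θ => ∑ q, ∑ r, ∑ s,
      (R p i q j * R r i s j) * (θ p * θ q * θ r * θ s)) (fun p => by fun_prop)]
    refine Finset.sum_congr rfl fun p _ => ?_
    rw [sI_sum Finset.univ (fun q θ => ∑ r, ∑ s,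
      (R p i q j * R r i s j) * (θ p * θ q * θ r * θ s)) (fun q => by fun_prop)]
    refine Finset.sum_congr rfl fun q _ => ?_
    rw [sI_sum Finset.univ (fun r θ => ∑ s,
      (R p i q j * R r i s j) * (θ p * θ q * θ r * θ s)) (fun r => by fun_prop)]
    refine Finset.sum_congr rfl fun r _ => ?_
    rw [sI_sum Finset.univ (fun s θ =>
      (R p i q j * R r i s j) * (θ p * θ q * θ r * θ s)) (fun s => by fun_prop)]
    refine Finset.sum_congr rfl fun s _ => ?_
    rw [sI_cmul, Mo_def]
  rw [step1]
  -- Step 2: moments to deltas, collapse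
  have step2 : ∑ i : Fin (k+1), ∑ j : Fin (k+1), ∑ p, ∑ q, ∑ r, ∑ s,
      (R p i q j * R r i s j) * Mo k p q r s
      = Mo k a a b b * ((∑ i, ∑ j, ∑ p, ∑ r, R p i p j * R r i r j)
        + ((∑ i, ∑ j, ∑ p, ∑ q, R p i q j * R p i q j)
        + (∑ i, ∑ j, ∑ p, ∑ q, R p i q j * R q i p j))) := by
    have hh : ∀ i j : Fin (k+1), ∑ p, ∑ q, ∑ r, ∑ s,
        (R p i q j * R r i s j) * Mo k p q r s
        = Mo k a a b b * ((∑ p, ∑ r, R p i p j * R r i r j)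
          + ((∑ p, ∑ q, R p i q j * R p i q j) + (∑ p, ∑ q, R p i q j * R q i p j))) := by
      intro i j
      have := sum4_delta (fun p q r s => R p i q j * R r i s j) (Mo k a a b b)
      rw [← this]
      refine Finset.sum_congr rfl fun p _ => Finset.sum_congr rfl fun q _ =>
        Finset.sum_congr rfl fun r _ => Finset.sum_congr rfl fun s _ => ?_
      rw [Mo_master hab p q r s]
    calc ∑ i : Fin (k+1), ∑ j : Fin (k+1), ∑ p, ∑ q, ∑ r, ∑ s,
        (R p i q j * R r i s j) * Mo k p q r s
        = ∑ i : Fin (k+1), ∑ j : Fin (k+1), Mo k a a b b *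
            ((∑ p, ∑ r, R p i p j * R r i r j)
            + ((∑ p, ∑ q, R p i q j * R p i q j) + (∑ p, ∑ q, R p i q j * R q i p j))) :=
          Finset.sum_congr rfl fun i _ => Finset.sum_congr rfl fun j _ => hh i j
      _ = Mo k a a b b * ∑ i : Fin (k+1), ∑ j : Fin (k+1),
            ((∑ p, ∑ r, R p i p j * R r i r j)
            + ((∑ p, ∑ q, R p i q j * R p i q j) + (∑ p, ∑ q, R p i q j * R q i p j))) := by
          rw [Finset.mul_sum]
          refine Finset.sum_congr rfl fun i _ => ?_
          rw [Finset.mul_sum]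
      _ = _ := by
          simp only [Finset.sum_add_distrib]
  rw [step2]
  -- Step 3: identify the three sums
  have hS1 : ∑ i : Fin (k+1), ∑ j : Fin (k+1), ∑ p, ∑ r, R p i p j * R r i r j
      = ∑ i, ∑ j, (∑ p, R p i p j) ^ 2 := by
    refine Finset.sum_congr rfl fun i _ => Finset.sum_congr rfl fun j _ => ?_
    rw [pow_two, Finset.sum_mul_sum]
  have hS2 : ∑ i : Fin (k+1), ∑ j : Fin (k+1), ∑ p, ∑ q, R p i q j * R p i q j
      = ∑ i, ∑ j, ∑ p, ∑ q, (R i j p q) ^ 2 := by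
    have h1 : ∑ i : Fin (k+1), ∑ j : Fin (k+1), ∑ p, ∑ q, R p i q j * R p i q j
        = ∑ i : Fin (k+1), ∑ j : Fin (k+1), ∑ p, ∑ q, (R p i q j)^2 := by
      refine Finset.sum_congr rfl fun i _ => Finset.sum_congr rfl fun j _ =>
        Finset.sum_congr rfl fun p _ => Finset.sum_congr rfl fun q _ => (pow_two _).symm
    rw [h1, sum4_reorder (fun i j p q => (R p i q j)^2)]
  have hS3 : ∑ i : Fin (k+1), ∑ j : Fin (k+1), ∑ p, ∑ q, R p i q j * R q i p j
      = (1/2) * ∑ i, ∑ j, ∑ p, ∑ q, (R i j p q) ^ 2 := by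
    rw [sum4_reorder (fun i j p q => R p i q j * R q i p j)]
    exact curv_half R hanti₂ hpair hbianchi
  rw [hS1, hS2, hS3]
  -- Step 4: arithmetic
  have hP : (((k:ℝ))+1) * (((k:ℝ))+3) ≠ 0 := by positivity
  have hV : (μH[k] (sphere (0 : EuclideanSpace ℝ (Fin (k+1))) 1)).toReal = sVol k :=
    (sVol_def k).symm
  have hdiv : sVol k / (((k:ℝ)+1) * (((k:ℝ))+3)) = Mo k a a b b := by
    rw [← hB, mul_div_cancel_left₀ _ hP]
  rw [hV, hdiv]
  ring

/-- For an algebraic curvature tensor `R` on `ℝ^{k+1}`,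
`∫_{S^k} Σ_{i,j} R(Θ,E_i,Θ,E_j)² = Vol(S^k)/((k+1)(k+3)) · (‖Ric‖² + (3/2)‖R‖²)`,
where `Ric i j = Σ_p R p i p j`. -/
theorem sphere_integral_curvature (k : ℕ)
    (R : Fin (k+1) → Fin (k+1) → Fin (k+1) → Fin (k+1) → ℝ)
    (hanti₁ : ∀ i j p q, R i j p q = -R j i p q)
    (hanti₂ : ∀ i j p q, R i j p q = -R i j q p)
    (hpair : ∀ i j p q, R i j p q = R p q i j)
    (hbianchi : ∀ i j p q, R i j p q + R i p q j + R i q j p = 0) :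
    ∫ θ in sphere (0 : EuclideanSpace ℝ (Fin (k+1))) 1,
        (∑ i, ∑ j, (∑ p, ∑ q, θ p * θ q * R p i q j) ^ 2) ∂μH[k] =
      (μH[k] (sphere (0 : EuclideanSpace ℝ (Fin (k+1))) 1)).toReal / ((k + 1) * (k + 3)) *
        ((∑ i, ∑ j, (∑ p, R p i p j) ^ 2) +
          3 / 2 * ∑ i, ∑ j, ∑ p, ∑ q, (R i j p q) ^ 2) := by
  rcases Nat.eq_zero_or_pos k with hk | hk
  · subst hk
    have hR0 : ∀ a b c d : Fin 1, R a b c d = 0 := by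
      intro a b c d
      have h := hanti₁ a a c d
      have h2 : R a b c d = R a a c d := by rw [Subsingleton.elim b a]
      linarith
    simp only [hR0]
    simp
  · obtain ⟨m, rfl⟩ : ∃ m, k = m + 1 := ⟨k - 1, (Nat.succ_pred_eq_of_pos hk).symm⟩
    have hab : (0 : Fin (m+1+1)) ≠ 1 := Fin.zero_ne_one
    exact main_aux (m+1) 0 1 hab R hanti₂ hpair hbianchi
end
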